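/- Let f_w be an l-layer GCN (l ≥ 2) with nonzero weight matrices W_1,…,W_l, let ΔW_1,…,ΔW_l be perturbation matrices of matching sizes with ‖ΔW_i‖₂ ≤ ‖W_i‖₂ / l for all i ∈ [l], and let ε > 0. Then for any graph G = (X, A) on n nodes with ‖X‖₂ ≤ B and any pair of classes i, j ∈ [K]: |RM(f_{w+Δw}(G); i, j) − RM(f_w(G); i, j)| ≤ 2e · (B+ε) · (∏_{i=1}^l ‖W_i‖₂) · Σ_{i=1}^l (‖ΔW_i‖₂ / ‖W_i‖₂). -/

import Mathlib

open MeasureTheory Matrix Finset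

noncomputable section

/-- Spectral norm of a real matrix: the operator norm induced by Euclidean vector norms. -/
def specNorm {m n : Type*} [Fintype m] [Fintype n] [DecidableEq n] (A : Matrix m n ℝ) : ℝ :=
  ‖LinearMap.toContinuousLinearMap (Matrix.toEuclideanLin A)‖

/-- Frobenius norm of a real matrix. -/
def frobNorm {m n : Type*} [Fintype m] [Fintype n] (A : Matrix m n ℝ) : ℝ :=
  Real.sqrt (∑ i, ∑ j, (A i j) ^ 2)

/-- Euclidean norm of a finite real vector. -/
def euclNorm {n : Type*} [Fintype n] (v : n → ℝ) : ℝ :=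
  Real.sqrt (∑ i, (v i) ^ 2)

/-- Entrywise ReLU on a matrix. -/
def relu {m k : Type*} (M : Matrix m k ℝ) : Matrix m k ℝ := M.map (fun x => max x 0)

/-- Node representations of a GCN: `H_0 = X`, `H_{k+1} = σ(P H_k W_{k+1})`
(we index weights from `0`, so `W k` is the paper's `W_{k+1}`). -/
def gcnRep {n : ℕ} (d : ℕ → ℕ) (W : ∀ k : ℕ, Matrix (Fin (d k)) (Fin (d (k + 1))) ℝ)
    (P : Matrix (Fin n) (Fin n) ℝ) (X : Matrix (Fin n) (Fin (d 0)) ℝ) :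
    (k : ℕ) → Matrix (Fin n) (Fin (d k)) ℝ
  | 0 => X
  | (k + 1) => relu (P * gcnRep d W P X k * W k)

/-- Output (readout) of an `l`-layer GCN: `f_w(G) = H_l = (1/n) 1_n H_{l-1} W_l`. -/
def gcnOut {n : ℕ} (d : ℕ → ℕ) (W : ∀ k : ℕ, Matrix (Fin (d k)) (Fin (d (k + 1))) ℝ)
    (P : Matrix (Fin n) (Fin n) ℝ) (X : Matrix (Fin n) (Fin (d 0)) ℝ) :
    (l : ℕ) → Fin (d l) → ℝ
  | 0 => fun _ => 0
  | (l + 1) => fun j => (n : ℝ)⁻¹ * ∑ i, (gcnRep d W P X l * W l) i j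

/-- Normalized graph Laplacian `P_G = D̃^{-1/2} Ã D̃^{-1/2}` with `Ã = A + I` and
`D̃ = diag(∑_j Ã_{ij})`, written entrywise. -/
def gcnLap {n : ℕ} (A : Matrix (Fin n) (Fin n) ℝ) : Matrix (Fin n) (Fin n) ℝ :=
  Matrix.of fun i j =>
    (A + 1) i j / (Real.sqrt (∑ k, (A + 1) i k) * Real.sqrt (∑ k, (A + 1) j k))

/-- The `ε`-attack set of a graph `G = (X, A)`: the node features may be moved by at most
`ε` in spectral norm, and the adjacency matrix may be replaced by any symmetric 0/1
matrix. -/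
def attack {n h₀ : ℕ} (ε : ℝ) (G : Matrix (Fin n) (Fin h₀) ℝ × Matrix (Fin n) (Fin n) ℝ) :
    Set (Matrix (Fin n) (Fin h₀) ℝ × Matrix (Fin n) (Fin n) ℝ) :=
  {G' | specNorm (G'.1 - G.1) ≤ ε ∧ G'.2.IsSymm ∧ ∀ i j, G'.2 i j = 0 ∨ G'.2 i j = 1}

/-- The robust margin operator of a pair of classes `(i, j)` for a GCN under `ε`-attacks:
`RM(f_w(G); i, j) = inf_{G' ∈ δ(G)} (f_w(G')_i - f_w(G')_j)`. -/
noncomputable def gcnRobustMarginPair {n : ℕ} (l : ℕ) (d : ℕ → ℕ)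
    (W : ∀ k : ℕ, Matrix (Fin (d k)) (Fin (d (k + 1))) ℝ) (ε : ℝ)
    (G : Matrix (Fin n) (Fin (d 0)) ℝ × Matrix (Fin n) (Fin n) ℝ) (i j : Fin (d l)) : ℝ :=
  sInf {x | ∃ G' ∈ attack ε G,
    gcnOut d W (gcnLap G'.2) G'.1 l i - gcnOut d W (gcnLap G'.2) G'.1 l j = x}

open scoped Matrix.Norms.L2Operator

lemma specNorm_eq_norm {m n : Type*} [Fintype m] [Fintype n] [DecidableEq n]
    (A : Matrix m n ℝ) : specNorm A = ‖A‖ := rfl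

lemma specNorm_transpose {m n : Type*} [Fintype m] [Fintype n] [DecidableEq n] [DecidableEq m]
    (A : Matrix m n ℝ) : ‖Aᵀ‖ = ‖A‖ := by
  have : Aᵀ = Aᴴ := by ext i j; simp [Matrix.conjTranspose_apply]
  rw [this, Matrix.l2_opNorm_conjTranspose]

/-- Euclidean norm wrapper. -/
def gEnorm {n : Type*} [Fintype n] (v : n → ℝ) : ℝ := ‖(WithLp.equiv 2 (n → ℝ)).symm v‖

lemma gEnorm_sq {n : Type*} [Fintype n] (v : n → ℝ) : gEnorm v ^ 2 = ∑ i, (v i) ^ 2 := by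
  rw [gEnorm, EuclideanSpace.norm_eq, Real.sq_sqrt (by positivity)]
  simp [sq_abs]

lemma gEnorm_nonneg {n : Type*} [Fintype n] (v : n → ℝ) : 0 ≤ gEnorm v := norm_nonneg _

lemma gEnorm_mulVec_le {m n : Type*} [Fintype m] [Fintype n] [DecidableEq n]
    (A : Matrix m n ℝ) (v : n → ℝ) : gEnorm (A *ᵥ v) ≤ ‖A‖ * gEnorm v := by
  have := Matrix.l2_opNorm_mulVec A ((WithLp.equiv 2 (n → ℝ)).symm v)
  exact this

variable {m n k : Type*} [Fintype m] [Fintype n] [Fintype k]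

def gFnorm (M : Matrix m k ℝ) : ℝ := ‖(WithLp.equiv 2 (m × k → ℝ)).symm (fun p => M p.1 p.2)‖

lemma gFnorm_eq (M : Matrix m k ℝ) : gFnorm M = Real.sqrt (∑ i, ∑ j, (M i j) ^ 2) := by
  rw [gFnorm, EuclideanSpace.norm_eq]
  congr 1
  simp only [WithLp.equiv_symm_apply, PiLp.toLp_apply, Real.norm_eq_abs, sq_abs]
  rw [Fintype.sum_prod_type]

lemma gFnorm_nonneg (M : Matrix m k ℝ) : 0 ≤ gFnorm M := norm_nonneg _

lemma gFnorm_zero : gFnorm (0 : Matrix m k ℝ) = 0 := by simp [gFnorm_eq]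

lemma gFnorm_add_le (A B : Matrix m k ℝ) : gFnorm (A + B) ≤ gFnorm A + gFnorm B := by
  have : (WithLp.equiv 2 (m × k → ℝ)).symm (fun p => (A + B) p.1 p.2)
      = (WithLp.equiv 2 (m × k → ℝ)).symm (fun p => A p.1 p.2)
        + (WithLp.equiv 2 (m × k → ℝ)).symm (fun p => B p.1 p.2) := by
    ext p; simp [Matrix.add_apply]
  rw [gFnorm, this]; exact norm_add_le _ _

lemma gFnorm_mono {A B : Matrix m k ℝ} (h : ∀ i j, |A i j| ≤ |B i j|) : gFnorm A ≤ gFnorm B := by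
  rw [gFnorm_eq, gFnorm_eq]
  apply Real.sqrt_le_sqrt
  refine Finset.sum_le_sum fun i _ => Finset.sum_le_sum fun j _ => ?_
  rw [← sq_abs (A i j), ← sq_abs (B i j)]
  exact pow_le_pow_left₀ (abs_nonneg _) (h i j) 2

lemma gFnorm_transpose (M : Matrix m k ℝ) : gFnorm Mᵀ = gFnorm M := by
  rw [gFnorm_eq, gFnorm_eq]; congr 1; rw [Finset.sum_comm]; rfl

lemma gFnorm_sq (M : Matrix m k ℝ) : gFnorm M ^ 2 = ∑ i, ∑ j, (M i j) ^ 2 := by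
  rw [gFnorm_eq, Real.sq_sqrt (by positivity)]

lemma gFnorm_mul_le_left [DecidableEq m] (A : Matrix n m ℝ) (M : Matrix m k ℝ) :
    gFnorm (A * M) ≤ ‖A‖ * gFnorm M := by
  have h1 : gFnorm (A * M) ^ 2 ≤ (‖A‖ * gFnorm M) ^ 2 := by
    calc gFnorm (A * M) ^ 2 = ∑ j, ∑ i, ((A * M) i j) ^ 2 := by
          rw [gFnorm_sq]; exact Finset.sum_comm
      _ ≤ ∑ j : k, ‖A‖ ^ 2 * ∑ i, (M i j) ^ 2 := by
          refine Finset.sum_le_sum fun j _ => ?_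
          have hcol : (fun i => (A * M) i j) = A *ᵥ (fun i => M i j) := by
            ext i; simp [Matrix.mul_apply, Matrix.mulVec, dotProduct]
          calc ∑ i, ((A * M) i j) ^ 2 = gEnorm (fun i => (A * M) i j) ^ 2 := (gEnorm_sq _).symm
            _ = gEnorm (A *ᵥ (fun i => M i j)) ^ 2 := by rw [hcol]
            _ ≤ (‖A‖ * gEnorm (fun i => M i j)) ^ 2 :=
                pow_le_pow_left₀ (gEnorm_nonneg _) (gEnorm_mulVec_le _ _) 2
            _ = ‖A‖ ^ 2 * ∑ i, (M i j) ^ 2 := by rw [mul_pow, gEnorm_sq]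
      _ = ‖A‖ ^ 2 * ∑ j, ∑ i, (M i j) ^ 2 := by rw [← Finset.mul_sum]
      _ = (‖A‖ * gFnorm M) ^ 2 := by rw [mul_pow, gFnorm_sq, Finset.sum_comm]
  calc gFnorm (A * M) = Real.sqrt (gFnorm (A * M) ^ 2) := (Real.sqrt_sq (gFnorm_nonneg _)).symm
    _ ≤ Real.sqrt ((‖A‖ * gFnorm M) ^ 2) := Real.sqrt_le_sqrt h1
    _ = ‖A‖ * gFnorm M := Real.sqrt_sq (mul_nonneg (norm_nonneg _) (gFnorm_nonneg _))

lemma gFnorm_mul_le_right [DecidableEq m] [DecidableEq n] [DecidableEq k]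
    (M : Matrix m n ℝ) (W : Matrix n k ℝ) :
    gFnorm (M * W) ≤ gFnorm M * ‖W‖ := by
  calc gFnorm (M * W) = gFnorm ((M * W)ᵀ) := (gFnorm_transpose _).symm
    _ = gFnorm (Wᵀ * Mᵀ) := by rw [Matrix.transpose_mul]
    _ ≤ ‖Wᵀ‖ * gFnorm Mᵀ := gFnorm_mul_le_left _ _
    _ = gFnorm M * ‖W‖ := by
        rw [gFnorm_transpose,
          show Wᵀ = Wᴴ by ext i j; simp [Matrix.conjTranspose_apply],
          Matrix.l2_opNorm_conjTranspose]; ring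

lemma gFnorm_le_sqrt_card_mul [DecidableEq m] [DecidableEq k] (M : Matrix m k ℝ) :
    gFnorm M ≤ Real.sqrt (Fintype.card m) * ‖M‖ := by
  have hMt : ‖Mᵀ‖ = ‖M‖ := by
    rw [show Mᵀ = Mᴴ by ext a b; simp [Matrix.conjTranspose_apply],
      Matrix.l2_opNorm_conjTranspose]
  have h1 : gFnorm M ^ 2 ≤ (Fintype.card m : ℝ) * ‖M‖ ^ 2 := by
    rw [gFnorm_sq]
    have hrowbd : ∀ i : m, ∑ j, (M i j) ^ 2 ≤ ‖M‖ ^ 2 := by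
      intro i
      have hrow : (fun j => M i j) = Mᵀ *ᵥ (Pi.single i 1) := by
        ext jj; simp [Matrix.mulVec_single]
      have hs : gEnorm (Pi.single i (1:ℝ)) = 1 := by
        have h := EuclideanSpace.norm_single (𝕜 := ℝ) (ι := m) i (1:ℝ)
        rw [EuclideanSpace.single] at h
        simpa [gEnorm] using h
      calc ∑ j, (M i j) ^ 2 = gEnorm (fun j => M i j) ^ 2 := (gEnorm_sq _).symm
        _ = gEnorm (Mᵀ *ᵥ (Pi.single i 1)) ^ 2 := by rw [hrow]
        _ ≤ (‖Mᵀ‖ * gEnorm (Pi.single i 1)) ^ 2 :=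
            pow_le_pow_left₀ (gEnorm_nonneg _) (gEnorm_mulVec_le _ _) 2
        _ = ‖M‖ ^ 2 := by rw [hs, mul_one, hMt]
    calc ∑ i : m, ∑ j, (M i j) ^ 2 ≤ ∑ _i : m, ‖M‖ ^ 2 :=
          Finset.sum_le_sum fun i _ => hrowbd i
      _ = (Fintype.card m : ℝ) * ‖M‖ ^ 2 := by rw [Finset.sum_const]; simp [mul_comm]
  calc gFnorm M = Real.sqrt (gFnorm M ^ 2) := (Real.sqrt_sq (gFnorm_nonneg _)).symm
    _ ≤ Real.sqrt ((Fintype.card m : ℝ) * ‖M‖ ^ 2) := Real.sqrt_le_sqrt h1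
    _ = Real.sqrt (Fintype.card m) * ‖M‖ := by
        rw [Real.sqrt_mul (by positivity), Real.sqrt_sq (norm_nonneg _)]

lemma gFnorm_relu_sub_le (A B : Matrix m k ℝ) :
    gFnorm (relu A - relu B) ≤ gFnorm (A - B) := by
  apply gFnorm_mono
  intro i j
  simpa [relu, Matrix.sub_apply] using abs_max_sub_max_le_abs (A i j) (B i j) 0

lemma gFnorm_relu_le (A : Matrix m k ℝ) : gFnorm (relu A) ≤ gFnorm A := by
  have h0 : relu (0 : Matrix m k ℝ) = 0 := by ext i j; simp [relu]
  have := gFnorm_relu_sub_le A (0 : Matrix m k ℝ)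
  rw [h0, sub_zero, sub_zero] at this
  exact this

def atil {n : ℕ} (A : Matrix (Fin n) (Fin n) ℝ) (i j : Fin n) : ℝ := (A + 1) i j
def dtil {n : ℕ} (A : Matrix (Fin n) (Fin n) ℝ) (i : Fin n) : ℝ := ∑ k, atil A i k

lemma gcnLap_apply {n : ℕ} (A : Matrix (Fin n) (Fin n) ℝ) (i j : Fin n) :
    gcnLap A i j = atil A i j / (Real.sqrt (dtil A i) * Real.sqrt (dtil A j)) := rfl

lemma lap_gEnorm_le {n : ℕ} (A : Matrix (Fin n) (Fin n) ℝ) (hs : A.IsSymm)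
    (h01 : ∀ i j, A i j = 0 ∨ A i j = 1) (v : Fin n → ℝ) :
    gEnorm (gcnLap A *ᵥ v) ≤ gEnorm v := by
  have hA0 : ∀ i j, 0 ≤ A i j := fun i j => by rcases h01 i j with h | h <;> simp [h]
  have hα : ∀ i j, 0 ≤ atil A i j := by
    intro i j
    simp only [atil, Matrix.add_apply, Matrix.one_apply]
    have := hA0 i j; split <;> linarith
  have hd1 : ∀ i, 1 ≤ dtil A i := by
    intro i
    have h1 : 1 ≤ atil A i i := by
      simp only [atil, Matrix.add_apply, Matrix.one_apply_eq]
      linarith [hA0 i i]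
    calc (1:ℝ) ≤ atil A i i := h1
      _ ≤ ∑ k, atil A i k := Finset.single_le_sum (fun k _ => hα i k) (Finset.mem_univ i)
  have hdpos : ∀ i, 0 < dtil A i := fun i => lt_of_lt_of_le one_pos (hd1 i)
  have hsymA : ∀ i j, atil A i j = atil A j i := by
    intro i j
    simp only [atil, Matrix.add_apply, Matrix.one_apply]
    have hAij : A i j = A j i := by
      have := congrFun (congrFun hs i) j
      simpa [Matrix.transpose_apply] using this.symm
    rw [hAij]; congr 1
    by_cases h : i = j <;> simp [h, eq_comm]
  set y : Fin n → ℝ := fun j => v j / Real.sqrt (dtil A j) with hy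
  have hentry : ∀ i, (gcnLap A *ᵥ v) i
      = (Real.sqrt (dtil A i))⁻¹ * ∑ j, atil A i j * y j := by
    intro i
    rw [Matrix.mulVec, dotProduct, Finset.mul_sum]
    refine Finset.sum_congr rfl fun j _ => ?_
    rw [gcnLap_apply, hy]
    simp only [div_eq_mul_inv, mul_inv]
    ring
  have key : gEnorm (gcnLap A *ᵥ v) ^ 2 ≤ gEnorm v ^ 2 := by
    rw [gEnorm_sq, gEnorm_sq]
    have step1 : ∀ i, ((gcnLap A *ᵥ v) i) ^ 2 ≤ ∑ j, atil A i j * y j ^ 2 := by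
      intro i
      rw [hentry i]
      have hCS : (∑ j, atil A i j * y j) ^ 2 ≤ dtil A i * ∑ j, atil A i j * y j ^ 2 := by
        have h := Finset.sum_mul_sq_le_sq_mul_sq Finset.univ
          (fun j => Real.sqrt (atil A i j)) (fun j => Real.sqrt (atil A i j) * y j)
        have e1 : ∀ j, Real.sqrt (atil A i j) * (Real.sqrt (atil A i j) * y j)
            = atil A i j * y j := by
          intro j; rw [← mul_assoc, Real.mul_self_sqrt (hα i j)]
        have e2 : ∀ j, Real.sqrt (atil A i j) ^ 2 = atil A i j := fun j => Real.sq_sqrt (hα i j)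
        have e3 : ∀ j, (Real.sqrt (atil A i j) * y j) ^ 2 = atil A i j * y j ^ 2 := by
          intro j; rw [mul_pow, e2]
        calc (∑ j, atil A i j * y j) ^ 2
            = (∑ j, Real.sqrt (atil A i j) * (Real.sqrt (atil A i j) * y j)) ^ 2 := by
              congr 1; exact (Finset.sum_congr rfl fun j _ => (e1 j)).symm
          _ ≤ (∑ j, Real.sqrt (atil A i j) ^ 2) * ∑ j, (Real.sqrt (atil A i j) * y j) ^ 2 := h
          _ = dtil A i * ∑ j, atil A i j * y j ^ 2 := by
              congr 1
              · exact Finset.sum_congr rfl fun j _ => e2 j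
              · exact Finset.sum_congr rfl fun j _ => e3 j
      rw [mul_pow, ← Real.sqrt_inv, Real.sq_sqrt (inv_nonneg.mpr (hdpos i).le)]
      rw [inv_mul_le_iff₀ (hdpos i)]
      linarith [hCS]
    calc ∑ i, ((gcnLap A *ᵥ v) i) ^ 2 ≤ ∑ i, ∑ j, atil A i j * y j ^ 2 :=
          Finset.sum_le_sum fun i _ => step1 i
      _ = ∑ j, (∑ i, atil A i j) * y j ^ 2 := by
          rw [Finset.sum_comm]
          exact Finset.sum_congr rfl fun j _ => (Finset.sum_mul _ _ _).symm
      _ = ∑ j, v j ^ 2 := by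
          refine Finset.sum_congr rfl fun j _ => ?_
          have hdj : ∑ i, atil A i j = dtil A j := by
            rw [dtil]; exact Finset.sum_congr rfl fun i _ => hsymA i j
          rw [hdj, hy]
          rw [div_pow, Real.sq_sqrt (le_of_lt (hdpos j))]
          rw [mul_comm, div_mul_cancel₀ _ (ne_of_gt (hdpos j))]
  calc gEnorm (gcnLap A *ᵥ v) = Real.sqrt (gEnorm (gcnLap A *ᵥ v) ^ 2) :=
        (Real.sqrt_sq (gEnorm_nonneg _)).symm
    _ ≤ Real.sqrt (gEnorm v ^ 2) := Real.sqrt_le_sqrt key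
    _ = gEnorm v := Real.sqrt_sq (gEnorm_nonneg _)

lemma lap_norm_le_one {n : ℕ} (A : Matrix (Fin n) (Fin n) ℝ) (hs : A.IsSymm)
    (h01 : ∀ i j, A i j = 0 ∨ A i j = 1) : ‖gcnLap A‖ ≤ 1 := by
  rw [Matrix.l2_opNorm_def]
  refine ContinuousLinearMap.opNorm_le_bound _ zero_le_one fun x => ?_
  rw [one_mul]
  have h1 : (LinearEquiv.trans Matrix.toEuclideanLin LinearMap.toContinuousLinearMap)
      (gcnLap A) x
      = (WithLp.equiv 2 (Fin n → ℝ)).symm (gcnLap A *ᵥ (WithLp.equiv 2 (Fin n → ℝ)) x) := rfl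
  rw [h1]
  calc ‖(WithLp.equiv 2 (Fin n → ℝ)).symm (gcnLap A *ᵥ (WithLp.equiv 2 (Fin n → ℝ)) x)‖
      = gEnorm (gcnLap A *ᵥ (WithLp.equiv 2 (Fin n → ℝ)) x) := rfl
    _ ≤ gEnorm ((WithLp.equiv 2 (Fin n → ℝ)) x) := lap_gEnorm_le A hs h01 _
    _ = ‖x‖ := rfl

lemma abs_col_sum_le {n k : ℕ} (D : Matrix (Fin n) (Fin k) ℝ) (j : Fin k) :
    |∑ i, D i j| ≤ Real.sqrt n * gFnorm D := by
  have h1 : (∑ i, D i j) ^ 2 ≤ (n : ℝ) * ∑ i, (D i j) ^ 2 := by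
    simpa using sq_sum_le_card_mul_sum_sq (s := (univ : Finset (Fin n)))
      (f := fun i => D i j)
  have h2 : ∑ i, (D i j) ^ 2 ≤ gFnorm D ^ 2 := by
    rw [gFnorm_sq]
    refine Finset.sum_le_sum fun i _ => ?_
    exact Finset.single_le_sum (f := fun j' => (D i j') ^ 2)
      (fun j' _ => sq_nonneg _) (mem_univ j)
  calc |∑ i, D i j| = Real.sqrt ((∑ i, D i j) ^ 2) := (Real.sqrt_sq_eq_abs _).symm
    _ ≤ Real.sqrt ((n : ℝ) * gFnorm D ^ 2) := by
        apply Real.sqrt_le_sqrt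
        calc (∑ i, D i j) ^ 2 ≤ (n : ℝ) * ∑ i, (D i j) ^ 2 := h1
          _ ≤ (n : ℝ) * gFnorm D ^ 2 := by
              exact mul_le_mul_of_nonneg_left h2 (Nat.cast_nonneg n)
    _ = Real.sqrt n * gFnorm D := by
        rw [Real.sqrt_mul (Nat.cast_nonneg n), Real.sqrt_sq (gFnorm_nonneg _)]

lemma rep_gFnorm_le {n : ℕ} (d : ℕ → ℕ) (V : ∀ k : ℕ, Matrix (Fin (d k)) (Fin (d (k + 1))) ℝ)
    (P : Matrix (Fin n) (Fin n) ℝ) (hP : ‖P‖ ≤ 1)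
    (X' : Matrix (Fin n) (Fin (d 0)) ℝ) (c : ℝ) (hc : 0 ≤ c) (hX' : ‖X'‖ ≤ c) (k : ℕ) :
    gFnorm (gcnRep d V P X' k) ≤ Real.sqrt n * c * ∏ i ∈ range k, ‖V i‖ := by
  induction k with
  | zero =>
      simp only [gcnRep, range_zero, prod_empty, mul_one]
      calc gFnorm X' ≤ Real.sqrt (Fintype.card (Fin n)) * ‖X'‖ := gFnorm_le_sqrt_card_mul X'
        _ = Real.sqrt n * ‖X'‖ := by rw [Fintype.card_fin]
        _ ≤ Real.sqrt n * c := mul_le_mul_of_nonneg_left hX' (Real.sqrt_nonneg _)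
  | succ k ih =>
      have h0 : 0 ≤ Real.sqrt n * c * ∏ i ∈ range k, ‖V i‖ := by
        apply mul_nonneg (mul_nonneg (Real.sqrt_nonneg _) hc)
        exact prod_nonneg fun i _ => norm_nonneg _
      calc gFnorm (gcnRep d V P X' (k + 1))
          = gFnorm (relu (P * gcnRep d V P X' k * V k)) := rfl
        _ ≤ gFnorm (P * gcnRep d V P X' k * V k) := gFnorm_relu_le _
        _ ≤ gFnorm (P * gcnRep d V P X' k) * ‖V k‖ := gFnorm_mul_le_right _ _
        _ ≤ (‖P‖ * gFnorm (gcnRep d V P X' k)) * ‖V k‖ := by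
            exact mul_le_mul_of_nonneg_right (gFnorm_mul_le_left _ _) (norm_nonneg _)
        _ ≤ (1 * gFnorm (gcnRep d V P X' k)) * ‖V k‖ := by
            apply mul_le_mul_of_nonneg_right _ (norm_nonneg _)
            exact mul_le_mul_of_nonneg_right hP (gFnorm_nonneg _)
        _ = gFnorm (gcnRep d V P X' k) * ‖V k‖ := by rw [one_mul]
        _ ≤ (Real.sqrt n * c * ∏ i ∈ range k, ‖V i‖) * ‖V k‖ :=
            mul_le_mul_of_nonneg_right ih (norm_nonneg _)
        _ = Real.sqrt n * c * ∏ i ∈ range (k + 1), ‖V i‖ := by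
            rw [prod_range_succ, mul_assoc]

lemma rep_diff_le {n : ℕ} (d : ℕ → ℕ) (l : ℕ) (hl : 1 ≤ l)
    (W ΔW : ∀ k : ℕ, Matrix (Fin (d k)) (Fin (d (k + 1))) ℝ)
    (hWpos : ∀ k, k < l → 0 < ‖W k‖) (hΔ : ∀ k, k < l → ‖ΔW k‖ ≤ ‖W k‖ / l)
    (P : Matrix (Fin n) (Fin n) ℝ) (hP : ‖P‖ ≤ 1)
    (X' : Matrix (Fin n) (Fin (d 0)) ℝ) (c : ℝ) (hc : 0 ≤ c) (hX' : ‖X'‖ ≤ c) :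
    ∀ k, k ≤ l →
      gFnorm (gcnRep d (fun i => W i + ΔW i) P X' k - gcnRep d W P X' k)
        ≤ Real.sqrt n * c * (∏ i ∈ range k, ‖W i‖) *
            ((1 + 1 / (l : ℝ)) ^ k * ∑ i ∈ range k, ‖ΔW i‖ / ‖W i‖) := by
  have hl0 : (0:ℝ) < l := by exact_mod_cast Nat.lt_of_lt_of_le Nat.zero_lt_one hl
  have ht0 : (0:ℝ) ≤ 1 + 1 / (l : ℝ) := by positivity
  have ht1 : (1:ℝ) ≤ 1 + 1 / (l : ℝ) := by
    have : (0:ℝ) ≤ 1 / (l:ℝ) := by positivity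
    linarith
  intro k
  induction k with
  | zero =>
      intro _
      have hz : gcnRep d (fun i => W i + ΔW i) P X' 0 - gcnRep d W P X' 0 = 0 := sub_self X'
      rw [hz]
      simp only [range_zero, sum_empty, mul_zero, prod_empty]
      have : gFnorm (0 : Matrix (Fin n) (Fin (d 0)) ℝ) = 0 := by
        simp [gFnorm]
        rfl
      rw [this]
  | succ k ih =>
      intro hk1
      have hkl : k ≤ l := Nat.le_of_succ_le hk1
      have hkl' : k < l := hk1
      have ihk := ih hkl
      set H' := gcnRep d (fun i => W i + ΔW i) P X' k with hH'
      set H := gcnRep d W P X' k with hH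
      have hHb : gFnorm H ≤ Real.sqrt n * c * ∏ i ∈ range k, ‖W i‖ :=
        rep_gFnorm_le d W P hP X' c hc hX' k
      set a := Real.sqrt n * c * ∏ i ∈ range k, ‖W i‖ with ha
      have ha0 : 0 ≤ a := by
        apply mul_nonneg (mul_nonneg (Real.sqrt_nonneg _) hc)
        exact prod_nonneg fun i _ => norm_nonneg _
      set t := 1 + 1 / (l : ℝ) with htdef
      set Sk := ∑ i ∈ range k, ‖ΔW i‖ / ‖W i‖ with hSk
      have hSk0 : 0 ≤ Sk :=
        sum_nonneg fun i _ => div_nonneg (norm_nonneg _) (norm_nonneg _)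
      have hrk0 : 0 ≤ ‖ΔW k‖ / ‖W k‖ := div_nonneg (norm_nonneg _) (norm_nonneg _)
      -- decompose
      have hdec : H' * (W k + ΔW k) - H * W k = (H' - H) * (W k + ΔW k) + H * ΔW k := by
        simp only [Matrix.sub_mul, Matrix.mul_add]
        abel
      have step1 : gFnorm (gcnRep d (fun i => W i + ΔW i) P X' (k+1) - gcnRep d W P X' (k+1))
          ≤ gFnorm (H' * (W k + ΔW k) - H * W k) := by
        calc gFnorm (gcnRep d (fun i => W i + ΔW i) P X' (k+1) - gcnRep d W P X' (k+1))
            = gFnorm (relu (P * H' * (W k + ΔW k)) - relu (P * H * W k)) := rfl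
          _ ≤ gFnorm (P * H' * (W k + ΔW k) - P * H * W k) := gFnorm_relu_sub_le _ _
          _ = gFnorm (P * (H' * (W k + ΔW k) - H * W k)) := by
              rw [Matrix.mul_sub, Matrix.mul_assoc, Matrix.mul_assoc]
          _ ≤ ‖P‖ * gFnorm (H' * (W k + ΔW k) - H * W k) := gFnorm_mul_le_left _ _
          _ ≤ 1 * gFnorm (H' * (W k + ΔW k) - H * W k) :=
              mul_le_mul_of_nonneg_right hP (gFnorm_nonneg _)
          _ = gFnorm (H' * (W k + ΔW k) - H * W k) := one_mul _
      have hWk' : ‖W k + ΔW k‖ ≤ ‖W k‖ * t := by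
        have := norm_add_le (W k) (ΔW k)
        have h2 := hΔ k hkl'
        rw [htdef]; rw [mul_add, mul_one, mul_one_div]
        linarith
      have hΔWk : ‖ΔW k‖ = ‖W k‖ * (‖ΔW k‖ / ‖W k‖) := by
        rw [mul_div_cancel₀]
        exact ne_of_gt (hWpos k hkl')
      have step2 : gFnorm (H' * (W k + ΔW k) - H * W k)
          ≤ gFnorm (H' - H) * (‖W k‖ * t) + gFnorm H * ‖ΔW k‖ := by
        rw [hdec]
        calc gFnorm ((H' - H) * (W k + ΔW k) + H * ΔW k)
            ≤ gFnorm ((H' - H) * (W k + ΔW k)) + gFnorm (H * ΔW k) := gFnorm_add_le _ _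
          _ ≤ gFnorm (H' - H) * ‖W k + ΔW k‖ + gFnorm H * ‖ΔW k‖ := by
              exact add_le_add (gFnorm_mul_le_right _ _) (gFnorm_mul_le_right _ _)
          _ ≤ gFnorm (H' - H) * (‖W k‖ * t) + gFnorm H * ‖ΔW k‖ := by
              exact add_le_add
                (mul_le_mul_of_nonneg_left hWk' (gFnorm_nonneg _)) le_rfl
      have step3 : gFnorm (H' - H) * (‖W k‖ * t) + gFnorm H * ‖ΔW k‖
          ≤ a * ‖W k‖ * (t ^ (k+1) * (Sk + ‖ΔW k‖ / ‖W k‖)) := by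
        have e1 : gFnorm (H' - H) * (‖W k‖ * t) ≤ a * (t ^ k * Sk) * (‖W k‖ * t) := by
          apply mul_le_mul_of_nonneg_right ihk
          exact mul_nonneg (norm_nonneg _) ht0
        have e2 : gFnorm H * ‖ΔW k‖ ≤ a * (‖W k‖ * (‖ΔW k‖ / ‖W k‖)) := by
          rw [← hΔWk]
          exact mul_le_mul_of_nonneg_right hHb (norm_nonneg _)
        have e3 : a * (t ^ k * Sk) * (‖W k‖ * t) + a * (‖W k‖ * (‖ΔW k‖ / ‖W k‖))
            = a * ‖W k‖ * (t ^ (k+1) * Sk + ‖ΔW k‖ / ‖W k‖) := by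
          rw [pow_succ]; ring
        have e4 : a * ‖W k‖ * (t ^ (k+1) * Sk + ‖ΔW k‖ / ‖W k‖)
            ≤ a * ‖W k‖ * (t ^ (k+1) * (Sk + ‖ΔW k‖ / ‖W k‖)) := by
          apply mul_le_mul_of_nonneg_left _ (mul_nonneg ha0 (norm_nonneg _))
          have htk1 : (1:ℝ) ≤ t ^ (k+1) := one_le_pow₀ ht1
          have h5 := mul_le_mul_of_nonneg_right htk1 hrk0
          rw [one_mul] at h5
          rw [mul_add]
          linarith
        calc gFnorm (H' - H) * (‖W k‖ * t) + gFnorm H * ‖ΔW k‖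
            ≤ a * (t ^ k * Sk) * (‖W k‖ * t) + a * (‖W k‖ * (‖ΔW k‖ / ‖W k‖)) :=
              add_le_add e1 e2
          _ = a * ‖W k‖ * (t ^ (k+1) * Sk + ‖ΔW k‖ / ‖W k‖) := e3
          _ ≤ a * ‖W k‖ * (t ^ (k+1) * (Sk + ‖ΔW k‖ / ‖W k‖)) := e4
      have hfinal : a * ‖W k‖ * (t ^ (k+1) * (Sk + ‖ΔW k‖ / ‖W k‖))
          = Real.sqrt n * c * (∏ i ∈ range (k+1), ‖W i‖) *
            (t ^ (k+1) * ∑ i ∈ range (k+1), ‖ΔW i‖ / ‖W i‖) := by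
        rw [ha, prod_range_succ, sum_range_succ, ← hSk]
        ring
      calc gFnorm (gcnRep d (fun i => W i + ΔW i) P X' (k+1) - gcnRep d W P X' (k+1))
          ≤ gFnorm (H' * (W k + ΔW k) - H * W k) := step1
        _ ≤ gFnorm (H' - H) * (‖W k‖ * t) + gFnorm H * ‖ΔW k‖ := step2
        _ ≤ a * ‖W k‖ * (t ^ (k+1) * (Sk + ‖ΔW k‖ / ‖W k‖)) := step3
        _ = _ := hfinal

lemma one_add_inv_pow_le_exp (l : ℕ) (hl : 1 ≤ l) :
    (1 + 1 / (l : ℝ)) ^ l ≤ Real.exp 1 := by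
  have hl0 : (0:ℝ) < l := by exact_mod_cast hl
  have h1 : (1 : ℝ) + 1 / l ≤ Real.exp (1 / l) := by
    have := Real.add_one_le_exp (1 / (l:ℝ)); linarith
  calc (1 + 1 / (l:ℝ)) ^ l ≤ Real.exp (1 / l) ^ l :=
        pow_le_pow_left₀ (by positivity) h1 l
    _ = Real.exp (l * (1 / l)) := by rw [← Real.exp_nat_mul]
    _ = Real.exp 1 := by rw [mul_one_div, div_self (ne_of_gt hl0)]

lemma sqrt_cancel (n : ℕ) (hn : 0 < n) (x : ℝ) (hx : 0 ≤ x) :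
    (n : ℝ)⁻¹ * (Real.sqrt n * (Real.sqrt n * x)) = x := by
  rw [← mul_assoc (Real.sqrt n), Real.mul_self_sqrt (Nat.cast_nonneg n), ← mul_assoc,
    inv_mul_cancel₀ (by exact_mod_cast hn.ne'), one_mul]

lemma gcn_out_abs_le {n : ℕ} (hn : 0 < n) (d : ℕ → ℕ)
    (V : ∀ k : ℕ, Matrix (Fin (d k)) (Fin (d (k + 1))) ℝ)
    (P : Matrix (Fin n) (Fin n) ℝ) (hP : ‖P‖ ≤ 1)
    (X' : Matrix (Fin n) (Fin (d 0)) ℝ) (c : ℝ) (hc : 0 ≤ c) (hX' : ‖X'‖ ≤ c)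
    (m : ℕ) (j : Fin (d (m + 1))) :
    |gcnOut d V P X' (m + 1) j| ≤ c * ∏ k ∈ range (m + 1), ‖V k‖ := by
  have hM : gFnorm (gcnRep d V P X' m * V m)
      ≤ Real.sqrt n * c * ∏ k ∈ range (m + 1), ‖V k‖ := by
    calc gFnorm (gcnRep d V P X' m * V m) ≤ gFnorm (gcnRep d V P X' m) * ‖V m‖ :=
          gFnorm_mul_le_right _ _
      _ ≤ (Real.sqrt n * c * ∏ i ∈ range m, ‖V i‖) * ‖V m‖ :=
          mul_le_mul_of_nonneg_right (rep_gFnorm_le d V P hP X' c hc hX' m) (norm_nonneg _)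
      _ = Real.sqrt n * c * ∏ k ∈ range (m + 1), ‖V k‖ := by
          rw [prod_range_succ, mul_assoc]
  have h1 : |gcnOut d V P X' (m + 1) j|
      ≤ (n : ℝ)⁻¹ * (Real.sqrt n * gFnorm (gcnRep d V P X' m * V m)) := by
    show |(n : ℝ)⁻¹ * ∑ i, (gcnRep d V P X' m * V m) i j| ≤ _
    rw [abs_mul, abs_of_nonneg (by positivity : (0:ℝ) ≤ ((n:ℝ))⁻¹)]
    exact mul_le_mul_of_nonneg_left (abs_col_sum_le _ j) (by positivity)
  calc |gcnOut d V P X' (m + 1) j|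
      ≤ (n : ℝ)⁻¹ * (Real.sqrt n * gFnorm (gcnRep d V P X' m * V m)) := h1
    _ ≤ (n : ℝ)⁻¹ * (Real.sqrt n * (Real.sqrt n * (c * ∏ k ∈ range (m + 1), ‖V k‖))) := by
        apply mul_le_mul_of_nonneg_left _ (by positivity)
        apply mul_le_mul_of_nonneg_left _ (Real.sqrt_nonneg _)
        calc gFnorm (gcnRep d V P X' m * V m)
            ≤ Real.sqrt n * c * ∏ k ∈ range (m + 1), ‖V k‖ := hM
          _ = Real.sqrt n * (c * ∏ k ∈ range (m + 1), ‖V k‖) := by rw [mul_assoc]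
    _ = c * ∏ k ∈ range (m + 1), ‖V k‖ := by
        apply sqrt_cancel n hn
        exact mul_nonneg hc (prod_nonneg fun k _ => norm_nonneg _)

lemma gcn_out_diff_le {n : ℕ} (hn : 0 < n) (d : ℕ → ℕ) (l : ℕ) (hl : 1 ≤ l)
    (W ΔW : ∀ k : ℕ, Matrix (Fin (d k)) (Fin (d (k + 1))) ℝ)
    (hWpos : ∀ k, k < l → 0 < ‖W k‖) (hΔ : ∀ k, k < l → ‖ΔW k‖ ≤ ‖W k‖ / l)
    (P : Matrix (Fin n) (Fin n) ℝ) (hP : ‖P‖ ≤ 1)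
    (X' : Matrix (Fin n) (Fin (d 0)) ℝ) (c : ℝ) (hc : 0 ≤ c) (hX' : ‖X'‖ ≤ c)
    (j : Fin (d l)) :
    |gcnOut d (fun k => W k + ΔW k) P X' l j - gcnOut d W P X' l j|
      ≤ Real.exp 1 * c * (∏ k ∈ range l, ‖W k‖) * (∑ k ∈ range l, ‖ΔW k‖ / ‖W k‖) := by
  obtain ⟨m, rfl⟩ : ∃ m, l = m + 1 := ⟨l - 1, (Nat.succ_pred_eq_of_pos (by omega)).symm⟩
  have hml : m < m + 1 := Nat.lt_succ_self m
  have hml' : m ≤ m + 1 := Nat.le_succ m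
  set H' := gcnRep d (fun k => W k + ΔW k) P X' m with hH'
  set H := gcnRep d W P X' m with hH
  set t := 1 + 1 / ((m + 1 : ℕ) : ℝ) with htdef
  have hl0 : (0:ℝ) < ((m + 1 : ℕ) : ℝ) := by positivity
  have ht0 : (0:ℝ) ≤ t := by positivity
  have ht1 : (1:ℝ) ≤ t := by rw [htdef]; have : (0:ℝ) ≤ 1 / ((m+1:ℕ):ℝ) := by positivity
                             linarith
  set Pm := ∏ i ∈ range m, ‖W i‖ with hPm
  set Sm := ∑ i ∈ range m, ‖ΔW i‖ / ‖W i‖ with hSm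
  have hPm0 : 0 ≤ Pm := prod_nonneg fun i _ => norm_nonneg _
  have hSm0 : 0 ≤ Sm := sum_nonneg fun i _ => div_nonneg (norm_nonneg _) (norm_nonneg _)
  have hrm0 : 0 ≤ ‖ΔW m‖ / ‖W m‖ := div_nonneg (norm_nonneg _) (norm_nonneg _)
  set a := Real.sqrt n * c * Pm with ha
  have ha0 : 0 ≤ a := mul_nonneg (mul_nonneg (Real.sqrt_nonneg _) hc) hPm0
  have b1 : gFnorm (H' - H) ≤ a * (t ^ m * Sm) :=
    rep_diff_le d (m+1) hl W ΔW hWpos hΔ P hP X' c hc hX' m hml'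
  have b2 : gFnorm H ≤ a := rep_gFnorm_le d W P hP X' c hc hX' m
  have hWm' : ‖W m + ΔW m‖ ≤ ‖W m‖ * t := by
    have h1 := norm_add_le (W m) (ΔW m)
    have h2 := hΔ m hml
    rw [htdef, mul_add, mul_one, mul_one_div]
    linarith
  have hΔWm : ‖ΔW m‖ = ‖W m‖ * (‖ΔW m‖ / ‖W m‖) := by
    rw [mul_div_cancel₀]; exact ne_of_gt (hWpos m hml)
  have hdec : H' * (W m + ΔW m) - H * W m = (H' - H) * (W m + ΔW m) + H * ΔW m := by
    simp only [Matrix.sub_mul, Matrix.mul_add]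
    abel
  have hD : gFnorm (H' * (W m + ΔW m) - H * W m)
      ≤ Real.sqrt n * (Real.exp 1 * c * (∏ k ∈ range (m+1), ‖W k‖) *
          (∑ k ∈ range (m+1), ‖ΔW k‖ / ‖W k‖)) := by
    have e1 : gFnorm ((H' - H) * (W m + ΔW m)) ≤ a * (t ^ m * Sm) * (‖W m‖ * t) := by
      calc gFnorm ((H' - H) * (W m + ΔW m)) ≤ gFnorm (H' - H) * ‖W m + ΔW m‖ :=
            gFnorm_mul_le_right _ _
        _ ≤ (a * (t ^ m * Sm)) * (‖W m‖ * t) := by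
            apply mul_le_mul b1 hWm' (norm_nonneg _)
            exact mul_nonneg ha0 (mul_nonneg (pow_nonneg ht0 _) hSm0)
    have e2 : gFnorm (H * ΔW m) ≤ a * (‖W m‖ * (‖ΔW m‖ / ‖W m‖)) := by
      calc gFnorm (H * ΔW m) ≤ gFnorm H * ‖ΔW m‖ := gFnorm_mul_le_right _ _
        _ ≤ a * ‖ΔW m‖ := mul_le_mul_of_nonneg_right b2 (norm_nonneg _)
        _ = a * (‖W m‖ * (‖ΔW m‖ / ‖W m‖)) := by rw [← hΔWm]
    have e3 : a * (t ^ m * Sm) * (‖W m‖ * t) + a * (‖W m‖ * (‖ΔW m‖ / ‖W m‖))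
        = a * ‖W m‖ * (t ^ (m+1) * Sm + ‖ΔW m‖ / ‖W m‖) := by
      rw [pow_succ]; ring
    have e4 : a * ‖W m‖ * (t ^ (m+1) * Sm + ‖ΔW m‖ / ‖W m‖)
        ≤ a * ‖W m‖ * (t ^ (m+1) * (Sm + ‖ΔW m‖ / ‖W m‖)) := by
      apply mul_le_mul_of_nonneg_left _ (mul_nonneg ha0 (norm_nonneg _))
      have htk1 : (1:ℝ) ≤ t ^ (m+1) := one_le_pow₀ ht1
      have h5 := mul_le_mul_of_nonneg_right htk1 hrm0
      rw [one_mul] at h5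
      rw [mul_add]
      linarith
    have e5 : a * ‖W m‖ * (t ^ (m+1) * (Sm + ‖ΔW m‖ / ‖W m‖))
        ≤ a * ‖W m‖ * (Real.exp 1 * (Sm + ‖ΔW m‖ / ‖W m‖)) := by
      apply mul_le_mul_of_nonneg_left _ (mul_nonneg ha0 (norm_nonneg _))
      apply mul_le_mul_of_nonneg_right (one_add_inv_pow_le_exp (m+1) hl)
      linarith
    have e6 : a * ‖W m‖ * (Real.exp 1 * (Sm + ‖ΔW m‖ / ‖W m‖))
        = Real.sqrt n * (Real.exp 1 * c * (∏ k ∈ range (m+1), ‖W k‖) *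
          (∑ k ∈ range (m+1), ‖ΔW k‖ / ‖W k‖)) := by
      rw [ha, prod_range_succ, sum_range_succ, ← hPm, ← hSm]
      ring
    calc gFnorm (H' * (W m + ΔW m) - H * W m)
        = gFnorm ((H' - H) * (W m + ΔW m) + H * ΔW m) := by rw [hdec]
      _ ≤ gFnorm ((H' - H) * (W m + ΔW m)) + gFnorm (H * ΔW m) := gFnorm_add_le _ _
      _ ≤ a * (t ^ m * Sm) * (‖W m‖ * t) + a * (‖W m‖ * (‖ΔW m‖ / ‖W m‖)) :=
          add_le_add e1 e2
      _ = a * ‖W m‖ * (t ^ (m+1) * Sm + ‖ΔW m‖ / ‖W m‖) := e3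
      _ ≤ a * ‖W m‖ * (t ^ (m+1) * (Sm + ‖ΔW m‖ / ‖W m‖)) := e4
      _ ≤ a * ‖W m‖ * (Real.exp 1 * (Sm + ‖ΔW m‖ / ‖W m‖)) := e5
      _ = _ := e6
  have hout : gcnOut d (fun k => W k + ΔW k) P X' (m+1) j - gcnOut d W P X' (m+1) j
      = (n : ℝ)⁻¹ * ∑ i, (H' * (W m + ΔW m) - H * W m) i j := by
    show (n : ℝ)⁻¹ * ∑ i, (H' * (W m + ΔW m)) i j - (n : ℝ)⁻¹ * ∑ i, (H * W m) i j = _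
    rw [← mul_sub, ← Finset.sum_sub_distrib]
    congr 1
  have hC0 : 0 ≤ Real.exp 1 * c * (∏ k ∈ range (m+1), ‖W k‖) *
      (∑ k ∈ range (m+1), ‖ΔW k‖ / ‖W k‖) := by
    apply mul_nonneg (mul_nonneg (mul_nonneg (Real.exp_pos 1).le hc)
      (prod_nonneg fun k _ => norm_nonneg _))
    exact sum_nonneg fun k _ => div_nonneg (norm_nonneg _) (norm_nonneg _)
  rw [hout, abs_mul, abs_of_nonneg (by positivity : (0:ℝ) ≤ ((n:ℝ))⁻¹)]
  calc (n : ℝ)⁻¹ * |∑ i, (H' * (W m + ΔW m) - H * W m) i j|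
      ≤ (n : ℝ)⁻¹ * (Real.sqrt n * gFnorm (H' * (W m + ΔW m) - H * W m)) :=
        mul_le_mul_of_nonneg_left (abs_col_sum_le _ j) (by positivity)
    _ ≤ (n : ℝ)⁻¹ * (Real.sqrt n * (Real.sqrt n * (Real.exp 1 * c *
          (∏ k ∈ range (m+1), ‖W k‖) * (∑ k ∈ range (m+1), ‖ΔW k‖ / ‖W k‖)))) := by
        apply mul_le_mul_of_nonneg_left _ (by positivity)
        exact mul_le_mul_of_nonneg_left hD (Real.sqrt_nonneg _)
    _ = _ := sqrt_cancel n hn _ hC0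
lemma gcn_out_abs_le' {n : ℕ} (hn : 0 < n) (d : ℕ → ℕ)
    (V : ∀ k : ℕ, Matrix (Fin (d k)) (Fin (d (k + 1))) ℝ)
    (P : Matrix (Fin n) (Fin n) ℝ) (hP : ‖P‖ ≤ 1)
    (X' : Matrix (Fin n) (Fin (d 0)) ℝ) (c : ℝ) (hc : 0 ≤ c) (hX' : ‖X'‖ ≤ c)
    (l : ℕ) (hl : 1 ≤ l) (j : Fin (d l)) :
    |gcnOut d V P X' l j| ≤ c * ∏ k ∈ range l, ‖V k‖ := by
  obtain ⟨m, rfl⟩ : ∃ m, l = m + 1 := ⟨l - 1, (Nat.succ_pred_eq_of_pos (by omega)).symm⟩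
  exact gcn_out_abs_le hn d V P hP X' c hc hX' m j

lemma abs_csInf_sub_csInf_le {S T : Set ℝ} (hS : S.Nonempty) (hT : T.Nonempty)
    (hSb : BddBelow S) (hTb : BddBelow T) {C : ℝ}
    (h1 : ∀ x ∈ S, ∃ y ∈ T, y ≤ x + C) (h2 : ∀ y ∈ T, ∃ x ∈ S, x ≤ y + C) :
    |sInf S - sInf T| ≤ C := by
  rw [abs_le]
  constructor
  · have h : sInf T - C ≤ sInf S := by
      apply le_csInf hS
      intro x hx
      obtain ⟨y, hy, hyx⟩ := h1 x hx
      have := csInf_le hTb hy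
      linarith
    linarith
  · have h : sInf S - C ≤ sInf T := by
      apply le_csInf hT
      intro y hy
      obtain ⟨x, hx, hxy⟩ := h2 y hy
      have := csInf_le hSb hx
      linarith
    linarith

/-- Perturbation bound for the robust margin operator of an `l`-layer GCN under
`ε`-attacks: if `‖ΔW_i‖₂ ≤ ‖W_i‖₂/l` for all `i` and `‖X‖₂ ≤ B`, then
`|RM(f_{w+Δw}(G); i, j) − RM(f_w(G); i, j)| ≤ 2e(B+ε)(∏‖W_i‖₂) Σ ‖ΔW_i‖₂/‖W_i‖₂`. -/
theorem gcn_robust_margin_pert_le (n l : ℕ) (hn : 0 < n) (hl : 2 ≤ l) (d : ℕ → ℕ)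
    (W ΔW : ∀ k : ℕ, Matrix (Fin (d k)) (Fin (d (k + 1))) ℝ)
    (hW : ∀ k, k < l → W k ≠ 0)
    (hΔ : ∀ k, k < l → specNorm (ΔW k) ≤ specNorm (W k) / l)
    (ε : ℝ) (hε : 0 < ε)
    (X : Matrix (Fin n) (Fin (d 0)) ℝ) (A : Matrix (Fin n) (Fin n) ℝ)
    (hsymm : A.IsSymm) (h01 : ∀ i j, A i j = 0 ∨ A i j = 1)
    (B : ℝ) (hX : specNorm X ≤ B) (i j : Fin (d l)) :
    |gcnRobustMarginPair l d (fun k => W k + ΔW k) ε (X, A) i j -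
        gcnRobustMarginPair l d W ε (X, A) i j| ≤
      2 * Real.exp 1 * (B + ε) * (∏ k ∈ Finset.range l, specNorm (W k)) *
        (∑ k ∈ Finset.range l, specNorm (ΔW k) / specNorm (W k)) := by
  classical
  have hl1 : 1 ≤ l := le_trans (by norm_num) hl
  simp only [specNorm_eq_norm] at hX hΔ ⊢
  set c := B + ε with hc_def
  have hB0 : (0:ℝ) ≤ B := le_trans (norm_nonneg X) hX
  have hc : 0 ≤ c := by rw [hc_def]; linarith
  have hWpos : ∀ k, k < l → 0 < ‖W k‖ := fun k hk => norm_pos_iff.mpr (hW k hk)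
  set Pi1 := ∏ k ∈ Finset.range l, ‖W k‖ with hPi1
  set Sl := ∑ k ∈ Finset.range l, ‖ΔW k‖ / ‖W k‖ with hSl
  have hPi10 : 0 ≤ Pi1 := Finset.prod_nonneg fun k _ => norm_nonneg _
  have hSl0 : 0 ≤ Sl := Finset.sum_nonneg fun k _ => div_nonneg (norm_nonneg _) (norm_nonneg _)
  set C1 := Real.exp 1 * c * Pi1 * Sl with hC1
  have hC10 : 0 ≤ C1 := by
    rw [hC1]
    exact mul_nonneg (mul_nonneg (mul_nonneg (Real.exp_pos 1).le hc) hPi10) hSl0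
  -- facts about attacked graphs
  have hatt : ∀ G' ∈ attack ε ((X, A) :
      Matrix (Fin n) (Fin (d 0)) ℝ × Matrix (Fin n) (Fin n) ℝ),
      ‖gcnLap G'.2‖ ≤ 1 ∧ ‖G'.1‖ ≤ c := by
    rintro G' ⟨hx, hsym, h01'⟩
    refine ⟨lap_norm_le_one _ hsym h01', ?_⟩
    have hx' : ‖G'.1 - X‖ ≤ ε := hx
    calc ‖G'.1‖ = ‖X + (G'.1 - X)‖ := by rw [add_sub_cancel]
      _ ≤ ‖X‖ + ‖G'.1 - X‖ := norm_add_le _ _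
      _ ≤ B + ε := add_le_add hX hx'
  -- the two margin sets
  rw [gcnRobustMarginPair, gcnRobustMarginPair]
  set f1 : (Matrix (Fin n) (Fin (d 0)) ℝ × Matrix (Fin n) (Fin n) ℝ) → ℝ := fun G' =>
    gcnOut d (fun k => W k + ΔW k) (gcnLap G'.2) G'.1 l i
      - gcnOut d (fun k => W k + ΔW k) (gcnLap G'.2) G'.1 l j with hf1
  set f2 : (Matrix (Fin n) (Fin (d 0)) ℝ × Matrix (Fin n) (Fin n) ℝ) → ℝ := fun G' =>
    gcnOut d W (gcnLap G'.2) G'.1 l i - gcnOut d W (gcnLap G'.2) G'.1 l j with hf2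
  have hmem0 : ((X, A) : Matrix (Fin n) (Fin (d 0)) ℝ × Matrix (Fin n) (Fin n) ℝ)
      ∈ attack ε (X, A) := by
    refine ⟨?_, hsymm, h01⟩
    show specNorm (X - X) ≤ ε
    rw [sub_self, specNorm_eq_norm, norm_zero]
    exact hε.le
  -- pointwise bounds
  have hdiff : ∀ G' ∈ attack ε ((X, A) :
      Matrix (Fin n) (Fin (d 0)) ℝ × Matrix (Fin n) (Fin n) ℝ),
      |f1 G' - f2 G'| ≤ 2 * C1 := by
    intro G' hG'
    obtain ⟨hP1, hXc⟩ := hatt G' hG'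
    have hi := gcn_out_diff_le hn d l hl1 W ΔW hWpos hΔ (gcnLap G'.2) hP1 G'.1 c hc hXc i
    have hj := gcn_out_diff_le hn d l hl1 W ΔW hWpos hΔ (gcnLap G'.2) hP1 G'.1 c hc hXc j
    rw [← hPi1, ← hSl, ← hC1] at hi hj
    rw [hf1, hf2]
    dsimp only
    rw [abs_le] at hi hj ⊢
    constructor <;> [linarith [hi.1, hi.2, hj.1, hj.2]; linarith [hi.1, hi.2, hj.1, hj.2]]
  have habs : ∀ G' ∈ attack ε ((X, A) :
      Matrix (Fin n) (Fin (d 0)) ℝ × Matrix (Fin n) (Fin n) ℝ),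
      |f1 G'| ≤ 2 * (c * ∏ k ∈ Finset.range l, ‖W k + ΔW k‖)
      ∧ |f2 G'| ≤ 2 * (c * Pi1) := by
    intro G' hG'
    obtain ⟨hP1, hXc⟩ := hatt G' hG'
    constructor
    · have hi := gcn_out_abs_le' hn d (fun k => W k + ΔW k) (gcnLap G'.2) hP1 G'.1 c hc hXc
        l hl1 i
      have hj := gcn_out_abs_le' hn d (fun k => W k + ΔW k) (gcnLap G'.2) hP1 G'.1 c hc hXc
        l hl1 j
      rw [hf1]; dsimp only
      rw [abs_le] at hi hj ⊢
      constructor <;> [linarith [hi.1, hi.2, hj.1, hj.2]; linarith [hi.1, hi.2, hj.1, hj.2]]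
    · have hi := gcn_out_abs_le' hn d W (gcnLap G'.2) hP1 G'.1 c hc hXc l hl1 i
      have hj := gcn_out_abs_le' hn d W (gcnLap G'.2) hP1 G'.1 c hc hXc l hl1 j
      rw [← hPi1] at hi hj
      rw [hf2]; dsimp only
      rw [abs_le] at hi hj ⊢
      constructor <;> [linarith [hi.1, hi.2, hj.1, hj.2]; linarith [hi.1, hi.2, hj.1, hj.2]]
  have key : |sInf {x | ∃ G' ∈ attack ε ((X, A) :
        Matrix (Fin n) (Fin (d 0)) ℝ × Matrix (Fin n) (Fin n) ℝ), f1 G' = x}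
      - sInf {x | ∃ G' ∈ attack ε ((X, A) :
        Matrix (Fin n) (Fin (d 0)) ℝ × Matrix (Fin n) (Fin n) ℝ), f2 G' = x}| ≤ 2 * C1 := by
    apply abs_csInf_sub_csInf_le
    · exact ⟨f1 (X, A), ⟨(X, A), hmem0, rfl⟩⟩
    · exact ⟨f2 (X, A), ⟨(X, A), hmem0, rfl⟩⟩
    · refine ⟨-(2 * (c * ∏ k ∈ Finset.range l, ‖W k + ΔW k‖)), ?_⟩
      rintro x ⟨G', hG', rfl⟩
      have := (habs G' hG').1
      rw [abs_le] at this
      linarith [this.1]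
    · refine ⟨-(2 * (c * Pi1)), ?_⟩
      rintro x ⟨G', hG', rfl⟩
      have := (habs G' hG').2
      rw [abs_le] at this
      linarith [this.1]
    · rintro x ⟨G', hG', rfl⟩
      refine ⟨f2 G', ⟨G', hG', rfl⟩, ?_⟩
      have := hdiff G' hG'
      rw [abs_le] at this
      linarith [this.2]
    · rintro y ⟨G', hG', rfl⟩
      refine ⟨f1 G', ⟨G', hG', rfl⟩, ?_⟩
      have := hdiff G' hG'
      rw [abs_le] at this
      linarith [this.1]
  have heq : (2:ℝ) * C1 = 2 * Real.exp 1 * c * Pi1 * Sl := by rw [hC1]; ring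
  rw [← heq]
  exact key

end
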